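/- (Knuth) Fix integers 1 ≤ r and n with 2r ≤ n. Let J_{n,r,r−1} be the 0–1 matrix indexed by r-element subsets of {1,…,n}, whose (s,t) entry is 1 if and only if |s ∩ t| = r − 1. Then the eigenvalues of J_{n,r,r−1} are exactly the r + 1 numbers λ_j = (r − j)(n − r) − j(r − j + 1) for j = 0, 1, …, r: every eigenvalue equals some λ_j, and each λ_j occurs as an eigenvalue. -/

import Mathlib

open Matrix Finset

lemma count_sub {n : ℕ} (k : ℕ) (u : Finset (Fin n)) :
    (Finset.univ.filter (fun t : {t : Finset (Fin n) // t.card = k} =>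
      (t : Finset (Fin n)) ⊆ u)).card = u.card.choose k := by
  rw [← Finset.card_powersetCard k u]
  refine Finset.card_bij (fun (t : {t : Finset (Fin n) // t.card = k}) _ => (t : Finset (Fin n))) ?_ ?_ ?_
  · rintro ⟨t, ht⟩ hmem
    simp only [Finset.mem_filter] at hmem
    exact Finset.mem_powersetCard.2 ⟨hmem.2, ht⟩
  · rintro ⟨t, ht⟩ _ ⟨t', ht'⟩ _ h
    exact Subtype.ext h
  · intro w hw
    rw [Finset.mem_powersetCard] at hw
    exact ⟨⟨w, hw.2⟩, Finset.mem_filter.2 ⟨Finset.mem_univ _, hw.1⟩, rfl⟩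

lemma count_sup {n r : ℕ} (u : Finset (Fin n)) (hur : u.card ≤ r) :
    (Finset.univ.filter (fun s : {s : Finset (Fin n) // s.card = r} =>
      u ⊆ (s : Finset (Fin n)))).card = (n - u.card).choose (r - u.card) := by
  have hc : uᶜ.card = n - u.card := by
    simp [Finset.card_compl]
  rw [← hc, ← Finset.card_powersetCard (r - u.card) uᶜ]
  refine Finset.card_bij (fun (s : {s : Finset (Fin n) // s.card = r}) _ => (s : Finset (Fin n)) \ u) ?_ ?_ ?_
  · rintro ⟨s, hs⟩ hmem
    simp only [Finset.mem_filter] at hmem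
    refine Finset.mem_powersetCard.2 ⟨?_, ?_⟩
    · intro x hx
      simp only [Finset.mem_sdiff] at hx
      simpa using hx.2
    · rw [Finset.card_sdiff_of_subset hmem.2, hs]
  · rintro ⟨s, hs⟩ hm ⟨s', hs'⟩ hm' h
    simp only [Finset.mem_filter] at hm hm'
    apply Subtype.ext
    simp only at h
    have : s \ u ∪ u = s' \ u ∪ u := by rw [h]
    rwa [Finset.sdiff_union_of_subset hm.2, Finset.sdiff_union_of_subset hm'.2] at this
  · intro w hw
    rw [Finset.mem_powersetCard] at hw
    have hdisj : Disjoint w u := by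
      intro a haw hau x hx
      have := hw.1 (haw hx)
      simp only [Finset.mem_compl] at this
      exact absurd (hau hx) this
    have hcard : (w ∪ u).card = r := by
      rw [Finset.card_union_of_disjoint hdisj, hw.2]
      omega
    refine ⟨⟨w ∪ u, hcard⟩, Finset.mem_filter.2 ⟨Finset.mem_univ _, Finset.subset_union_right⟩, ?_⟩
    simp only
    rw [Finset.union_sdiff_cancel_right ?_]
    · exact hdisj

abbrev KSub (n r : ℕ) := {s : Finset (Fin n) // s.card = r}

noncomputable def Jm (n r : ℕ) : Matrix (KSub n r) (KSub n r) ℝ :=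
  Matrix.of fun s t =>
    if ((s : Finset (Fin n)) ∩ (t : Finset (Fin n))).card + 1 = r then (1 : ℝ) else 0

noncomputable def Cm (n r : ℕ) : Matrix (KSub n r) (KSub n (r - 1)) ℝ :=
  Matrix.of fun s t => if (t : Finset (Fin n)) ⊆ (s : Finset (Fin n)) then (1 : ℝ) else 0

noncomputable def lamR (n r j : ℕ) : ℝ :=
  ((r : ℝ) - (j : ℝ)) * ((n : ℝ) - (r : ℝ)) - (j : ℝ) * ((r : ℝ) - (j : ℝ) + 1)

lemma sum_boole_card {ι : Type*} [Fintype ι] (p : ι → Prop) [DecidablePred p] :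
    (∑ x : ι, if p x then (1 : ℝ) else 0) = ((Finset.univ.filter p).card : ℝ) := by
  simp [Finset.sum_boole]

-- Lemma A
lemma CCt (n r : ℕ) (hr : 1 ≤ r) :
    Cm n r * (Cm n r)ᵀ = Jm n r + (r : ℝ) • 1 := by
  ext s s'
  simp only [Matrix.mul_apply, Cm, Matrix.transpose_apply, Matrix.of_apply,
    Matrix.add_apply, Matrix.smul_apply, Matrix.one_apply, Jm, smul_eq_mul]
  have : ∀ t : KSub n (r-1),
      (if (t:Finset (Fin n)) ⊆ (s:Finset (Fin n)) then (1:ℝ) else 0) *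
      (if (t:Finset (Fin n)) ⊆ (s':Finset (Fin n)) then (1:ℝ) else 0) =
      (if (t:Finset (Fin n)) ⊆ (s:Finset (Fin n)) ∩ (s':Finset (Fin n)) then (1:ℝ) else 0) := by
    intro t
    by_cases h1 : (t:Finset (Fin n)) ⊆ (s:Finset (Fin n)) <;>
      by_cases h2 : (t:Finset (Fin n)) ⊆ (s':Finset (Fin n)) <;>
      simp [h1, h2, Finset.subset_inter_iff]
  rw [Finset.sum_congr rfl (fun t _ => this t), sum_boole_card,
    count_sub (r-1) ((s:Finset (Fin n)) ∩ (s':Finset (Fin n)))]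
  rcases eq_or_ne s s' with h | h
  · subst h
    have h1 : ((s:Finset (Fin n)) ∩ (s:Finset (Fin n))).card = r := by
      rw [Finset.inter_self]; exact s.2
    rw [h1]
    have : r.choose (r-1) = r := by
      have := Nat.choose_symm (n := r) (k := 1) hr
      simp at this
      omega
    rw [this]
    simp [if_neg (by omega : ¬ (r + 1 = r))]
  · have hlt : ((s:Finset (Fin n)) ∩ (s':Finset (Fin n))).card ≤ r - 1 := by
      by_contra hcon
      push_neg at hcon
      have hle : ((s:Finset (Fin n)) ∩ (s':Finset (Fin n))).card ≤ r := by
        calc _ ≤ (s:Finset (Fin n)).card := Finset.card_le_card Finset.inter_subset_left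
        _ = r := s.2
      have hc : ((s:Finset (Fin n)) ∩ (s':Finset (Fin n))).card = r := by omega
      have h1 : (s:Finset (Fin n)) ∩ (s':Finset (Fin n)) = (s:Finset (Fin n)) :=
        Finset.eq_of_subset_of_card_le Finset.inter_subset_left (by rw [hc, s.2])
      have h2 : (s:Finset (Fin n)) ∩ (s':Finset (Fin n)) = (s':Finset (Fin n)) :=
        Finset.eq_of_subset_of_card_le Finset.inter_subset_right (by rw [hc, s'.2])
      exact h (Subtype.ext (h1.symm.trans h2))
    rcases eq_or_lt_of_le hlt with he | hl
    · rw [he, Nat.choose_self, if_pos (by omega), if_neg h]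
      simp
    · rw [Nat.choose_eq_zero_of_lt hl, if_neg (by omega), if_neg h]
      simp

-- Lemma B
lemma CtC (n r : ℕ) (hr : 1 ≤ r) (hn : r ≤ n) :
    (Cm n r)ᵀ * Cm n r = Jm n (r - 1) + ((n : ℝ) - (r : ℝ) + 1) • 1 := by
  ext t t'
  simp only [Matrix.mul_apply, Cm, Matrix.transpose_apply, Matrix.of_apply,
    Matrix.add_apply, Matrix.smul_apply, Matrix.one_apply, Jm, smul_eq_mul]
  have key : ∀ s : KSub n r,
      (if (t:Finset (Fin n)) ⊆ (s:Finset (Fin n)) then (1:ℝ) else 0) *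
      (if (t':Finset (Fin n)) ⊆ (s:Finset (Fin n)) then (1:ℝ) else 0) =
      (if (t:Finset (Fin n)) ∪ (t':Finset (Fin n)) ⊆ (s:Finset (Fin n)) then (1:ℝ) else 0) := by
    intro s
    by_cases h1 : (t:Finset (Fin n)) ⊆ (s:Finset (Fin n)) <;>
      by_cases h2 : (t':Finset (Fin n)) ⊆ (s:Finset (Fin n)) <;>
      simp [h1, h2, Finset.union_subset_iff]
  rw [Finset.sum_congr rfl (fun s _ => key s), sum_boole_card]
  set u := (t:Finset (Fin n)) ∪ (t':Finset (Fin n)) with hu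
  have hcardsum : u.card + ((t:Finset (Fin n)) ∩ (t':Finset (Fin n))).card = (r-1) + (r-1) := by
    rw [Finset.card_union_add_card_inter, t.2, t'.2]
  rcases eq_or_ne t t' with h | h
  · subst h
    have huc : u.card = r - 1 := by rw [hu, Finset.union_self]; exact t.2
    rw [count_sup u (by omega)]
    have h1 : n - u.card = n - r + 1 := by omega
    have h2 : r - u.card = 1 := by omega
    rw [h1, h2, Nat.choose_one_right]
    have hcond : ¬ (((t:Finset (Fin n)) ∩ (t:Finset (Fin n))).card + 1 = r - 1) := by
      rw [Finset.inter_self, t.2]; omega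
    rw [if_neg hcond, if_pos rfl]
    push_cast [Nat.cast_sub hn]
    ring
  · have hne : (t:Finset (Fin n)) ≠ (t':Finset (Fin n)) := fun hc => h (Subtype.ext hc)
    have hr2 : 2 ≤ r := by
      by_contra hc
      have : r = 1 := by omega
      apply hne
      have h1 : (t:Finset (Fin n)) = ∅ := Finset.card_eq_zero.1 (by rw [t.2, this])
      have h2 : (t':Finset (Fin n)) = ∅ := Finset.card_eq_zero.1 (by rw [t'.2, this])
      rw [h1, h2]
    have huge : r ≤ u.card := by
      have hsub : (t:Finset (Fin n)) ⊆ u := Finset.subset_union_left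
      have hne2 : (t:Finset (Fin n)) ≠ u := by
        intro hc
        exact hne ((Finset.eq_of_subset_of_card_le (hc ▸ Finset.subset_union_right)
          (by rw [t.2, t'.2])).symm)
      have := Finset.card_lt_card (Finset.ssubset_iff_subset_ne.2 ⟨hsub, hne2⟩)
      rw [t.2] at this
      omega
    rcases eq_or_lt_of_le huge with heq | hlt
    · rw [count_sup u heq.symm.le]
      have h2 : r - u.card = 0 := by omega
      rw [h2, Nat.choose_zero_right]
      have hcap : ((t:Finset (Fin n)) ∩ (t':Finset (Fin n))).card + 1 = r - 1 := by omega
      rw [if_pos hcap, if_neg h]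
      simp
    · have hemp : (Finset.univ.filter (fun s : KSub n r => u ⊆ (s:Finset (Fin n)))) = ∅ := by
        rw [Finset.filter_eq_empty_iff]
        intro s _ hc
        have := Finset.card_le_card hc
        rw [s.2] at this
        omega
      rw [hemp]
      have hcap : ¬ (((t:Finset (Fin n)) ∩ (t':Finset (Fin n))).card + 1 = r - 1) := by omega
      rw [if_neg hcap, if_neg h]
      simp

lemma lam_shift (n r j : ℕ) (hr : 1 ≤ r) :
    lamR n r j + r = lamR n (r-1) j + ((n : ℝ) - r + 1) := by
  unfold lamR
  push_cast [Nat.cast_sub hr]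
  ring

lemma lam_last (n r : ℕ) : lamR n r r = -r := by
  unfold lamR; ring

def mprod {M : Type*} [Monoid M] (f : ℕ → M) : ℕ → M
  | 0 => 1
  | (N+1) => mprod f N * f N

lemma mprod_congr {M : Type*} [Monoid M] (f g : ℕ → M) (N : ℕ)
    (h : ∀ j, j < N → f j = g j) : mprod f N = mprod g N := by
  induction N with
  | zero => rfl
  | succ N ih => rw [mprod, mprod, ih (fun j hj => h j (by omega)), h N (by omega)]

lemma intertwine {m k : Type*} [Fintype m] [Fintype k] [DecidableEq m] [DecidableEq k]
    (A : Matrix m k ℝ) (B : Matrix k m ℝ) (N : ℕ) (c : ℕ → ℝ) :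
    A * mprod (fun j => B * A - c j • 1) N =
    mprod (fun j => A * B - c j • 1) N * A := by
  induction N with
  | zero => simp [mprod]
  | succ N ih =>
    rw [mprod, mprod, ← Matrix.mul_assoc, ih, Matrix.mul_assoc,
      Matrix.mul_assoc (mprod (fun j => A * B - c j • 1) N) _ A]
    congr 1
    rw [Matrix.mul_sub, Matrix.sub_mul, ← Matrix.mul_assoc, Matrix.mul_smul, Matrix.smul_mul,
      Matrix.mul_one, Matrix.one_mul]

lemma annihilate : ∀ r n : ℕ, 2 * r ≤ n →
    mprod (fun j => Jm n r - lamR n r j • 1) (r+1) = 0 := by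
  intro r
  induction r with
  | zero =>
    intro n _
    have h1 : Jm n 0 = 0 := by
      ext s t; simp [Jm]
    have h2 : lamR n 0 0 = 0 := by unfold lamR; push_cast; ring
    simp [mprod, h1, h2]
  | succ r ih =>
    intro n hn
    set R := r + 1 with hR
    have hr1 : 1 ≤ R := by omega
    have hA := CCt n R hr1
    have hB := CtC n R hr1 (by omega)
    have hlast : Jm n R - lamR n R R • 1 = Cm n R * (Cm n R)ᵀ := by
      rw [hA, lam_last]
      module
    have hfac : ∀ j, Jm n R - lamR n R j • 1 =
        Cm n R * (Cm n R)ᵀ - (lamR n R j + R) • 1 := by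
      intro j
      rw [hA]
      module
    have hfac' : ∀ j, (Cm n R)ᵀ * Cm n R - (lamR n R j + R) • 1 =
        Jm n (R-1) - lamR n (R-1) j • 1 := by
      intro j
      rw [hB, lam_shift n R j hr1]
      module
    rw [mprod, hlast,
      mprod_congr _ (fun j => Cm n R * (Cm n R)ᵀ - (lamR n R j + R) • 1) R
        (fun j _ => hfac j), ← Matrix.mul_assoc,
      ← intertwine (Cm n R) ((Cm n R)ᵀ) R (fun j => lamR n R j + R),
      mprod_congr _ (fun j => Jm n (R-1) - lamR n (R-1) j • 1) R (fun j _ => hfac' j)]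
    have h0 : mprod (fun j => Jm n (R-1) - lamR n (R-1) j • 1) R = 0 := ih n (by omega)
    rw [h0]
    simp

lemma choose_strict (n R : ℕ) (hr : 1 ≤ R) (hn : 2 * R ≤ n) :
    n.choose (R - 1) < n.choose R := by
  obtain ⟨r, rfl⟩ : ∃ r, R = r + 1 := ⟨R - 1, by omega⟩
  simp only [Nat.add_sub_cancel]
  have key := Nat.choose_succ_right_eq n r
  have hpos : 0 < n.choose r := Nat.choose_pos (by omega)
  have h1 : n.choose r * (r + 1) < n.choose r * (n - r) :=
    mul_lt_mul_of_pos_left (by omega) hpos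
  rw [← key] at h1
  exact Nat.lt_of_mul_lt_mul_right h1

lemma mu_pos (n R j : ℕ) (hj : j < R) (hn : 2 * R ≤ n) : 0 < lamR n R j + R := by
  unfold lamR
  have h1 : (j : ℝ) + 1 ≤ (R : ℝ) := by exact_mod_cast hj
  have h2 : 2 * (R : ℝ) ≤ (n : ℝ) := by exact_mod_cast hn
  nlinarith [mul_le_mul_of_nonneg_left (show (R:ℝ) ≤ (n:ℝ) - R by linarith)
    (show (0:ℝ) ≤ (R:ℝ) - j by linarith), sq_nonneg ((R:ℝ) - j)]

lemma eigen_exists : ∀ r n : ℕ, 2 * r ≤ n → ∀ j ≤ r,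
    ∃ v : KSub n r → ℝ, v ≠ 0 ∧ (Jm n r).mulVec v = lamR n r j • v := by
  intro r
  induction r with
  | zero =>
    intro n _ j hj
    interval_cases j
    refine ⟨fun _ => 1, ?_, ?_⟩
    · intro hv
      have := congrFun hv ⟨∅, Finset.card_empty⟩
      simp at this
    · have h1 : Jm n 0 = 0 := by ext s t; simp [Jm]
      have h2 : lamR n 0 0 = 0 := by unfold lamR; push_cast; ring
      simp [h1, h2]
  | succ r ih =>
    intro n hn j hj
    set R := r + 1 with hR
    have hr1 : 1 ≤ R := by omega
    have hA := CCt n R hr1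
    have hB := CtC n R hr1 (by omega)
    have hJeq : Jm n R = Cm n R * (Cm n R)ᵀ - (R : ℝ) • 1 := by
      rw [hA]; module
    rcases eq_or_lt_of_le hj with hjr | hjlt
    · -- j = R : kernel vector
      subst hjr
      -- the transpose map is not injective
      have hcard : Fintype.card (KSub n (R-1)) < Fintype.card (KSub n R) := by
        rw [Fintype.card_finset_len, Fintype.card_finset_len, Fintype.card_fin]
        exact choose_strict n R hr1 hn
      have hnotinj : ¬ Function.Injective ((Cm n R)ᵀ.mulVecLin) := by
        intro hinj
        have := LinearMap.finrank_le_finrank_of_injective hinj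
        rw [Module.finrank_fintype_fun_eq_card, Module.finrank_fintype_fun_eq_card] at this
        omega
      rw [Function.not_injective_iff] at hnotinj
      obtain ⟨x, y, hxy, hne⟩ := hnotinj
      refine ⟨x - y, sub_ne_zero.2 hne, ?_⟩
      have hker : (Cm n R)ᵀ.mulVec (x - y) = 0 := by
        have h' : (Cm n R)ᵀ.mulVecLin (x - y) = 0 := by
          rw [map_sub, hxy, sub_self]
        rwa [Matrix.mulVecLin_apply] at h'
      rw [hJeq, Matrix.sub_mulVec, ← Matrix.mulVec_mulVec, hker, Matrix.mulVec_zero,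
        Matrix.smul_mulVec, Matrix.one_mulVec, lam_last]
      module
    · -- j < R : push up from level r
      have hjr : j ≤ r := by omega
      obtain ⟨w, hw0, hww⟩ := ih n (by omega) j hjr
      set μ : ℝ := lamR n R j + R with hμ
      have hμpos := mu_pos n R j hjlt hn
      have hCtCw : ((Cm n R)ᵀ * Cm n R).mulVec w = μ • w := by
        rw [hB, Matrix.add_mulVec, Matrix.smul_mulVec, Matrix.one_mulVec]
        have : (Jm n (R-1)).mulVec w = lamR n (R-1) j • w := hww
        rw [this, ← add_smul, hμ, lam_shift n R j hr1]
      refine ⟨(Cm n R).mulVec w, ?_, ?_⟩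
      · intro hv
        have : ((Cm n R)ᵀ * Cm n R).mulVec w = 0 := by
          rw [← Matrix.mulVec_mulVec, hv, Matrix.mulVec_zero]
        rw [hCtCw] at this
        exact hw0 (by simpa [smul_eq_zero, (show μ ≠ 0 from hμpos.ne')] using this)
      · rw [hJeq, Matrix.sub_mulVec, Matrix.mulVec_mulVec, Matrix.mul_assoc,
          ← Matrix.mulVec_mulVec, hCtCw, Matrix.mulVec_smul, Matrix.smul_mulVec,
          Matrix.one_mulVec]
        rw [hμ]
        module

lemma mprod_mulVec {m : Type*} [Fintype m] [DecidableEq m] (A : Matrix m m ℝ) (v : m → ℝ) (μ : ℝ)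
    (hv : A.mulVec v = μ • v) (c : ℕ → ℝ) (N : ℕ) :
    (mprod (fun j => A - c j • 1) N).mulVec v = (∏ j ∈ Finset.range N, (μ - c j)) • v := by
  induction N with
  | zero => simp [mprod]
  | succ N ih =>
    rw [mprod, ← Matrix.mulVec_mulVec, Matrix.sub_mulVec, hv, Matrix.smul_mulVec,
      Matrix.one_mulVec, ← sub_smul, Matrix.mulVec_smul, ih, Finset.prod_range_succ, smul_smul,
      mul_comm]

theorem stmt_4 (n r : ℕ) (hr : 1 ≤ r) (hn : 2 * r ≤ n)
    (J : Matrix {s : Finset (Fin n) // s.card = r} {s : Finset (Fin n) // s.card = r} ℝ)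
    (hJ : ∀ s t, J s t = if ((s : Finset (Fin n)) ∩ (t : Finset (Fin n))).card = r - 1
      then (1 : ℝ) else 0)
    (lam : ℕ → ℝ)
    (hlam : ∀ j, lam j =
      ((r : ℝ) - (j : ℝ)) * ((n : ℝ) - (r : ℝ)) - (j : ℝ) * ((r : ℝ) - (j : ℝ) + 1)) :
    (∀ μ : ℝ, Module.End.HasEigenvalue (Matrix.toLin' J) μ → ∃ j ≤ r, μ = lam j) ∧
    (∀ j ≤ r, Module.End.HasEigenvalue (Matrix.toLin' J) (lam j)) := by
  have hJm : J = Jm n r := by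
    ext s t
    rw [hJ s t]
    exact if_congr (by omega) rfl rfl
  have hlam' : ∀ j, lam j = lamR n r j := fun j => by rw [hlam]; rfl
  constructor
  · intro μ hμ
    obtain ⟨v, hv⟩ := hμ.exists_hasEigenvector
    have hvec : (Jm n r).mulVec v = μ • v := by
      have h := hv.apply_eq_smul
      rwa [Matrix.toLin'_apply, hJm] at h
    have hzero := annihilate r n hn
    have hkey := mprod_mulVec (Jm n r) v μ hvec (fun j => lamR n r j) (r + 1)
    rw [hzero, Matrix.zero_mulVec] at hkey
    have hprod : (∏ j ∈ Finset.range (r+1), (μ - lamR n r j)) = 0 := by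
      rcases smul_eq_zero.1 hkey.symm with h | h
      · exact h
      · exact absurd h hv.2
    obtain ⟨j, hjmem, hj0⟩ := Finset.prod_eq_zero_iff.1 hprod
    refine ⟨j, Nat.lt_succ_iff.1 (Finset.mem_range.1 hjmem), ?_⟩
    rw [hlam' j]
    linarith
  · intro j hj
    obtain ⟨v, hv0, hvec⟩ := eigen_exists r n hn j hj
    apply Module.End.hasEigenvalue_of_hasEigenvector (x := v)
    refine ⟨?_, hv0⟩
    rw [Module.End.mem_eigenspace_iff, Matrix.toLin'_apply, hJm, hvec, hlam' j]
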